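/- Let [B B_c] ∈ ℝ^{N×N} be an orthogonal matrix with B ∈ ℝ^{N×r} and B_c ∈ ℝ^{N×(N−r)}, and let P ∈ ℝ^{(N−r)×r} be any matrix. Then ‖(B + B_c·P)·(I_r + PᵀP)^{−1/2} − B‖₂ ≤ 2·‖P‖₂. -/

import Mathlib

open Matrix

open scoped ComplexOrder in
noncomputable def Matrix.PosSemidef.sqrt {n : Type*} [Fintype n] [DecidableEq n]
    {𝕜 : Type*} [RCLike 𝕜] {A : Matrix n n 𝕜} (hA : A.PosSemidef) : Matrix n n 𝕜 :=
  hA.1.eigenvectorUnitary.1 * diagonal ((↑) ∘ (Real.sqrt ·) ∘ hA.1.eigenvalues) *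
  (star hA.1.eigenvectorUnitary : Matrix n n 𝕜)

/-- Frobenius norm of a real matrix: `(tr(MᵀM))^{1/2}`. -/
noncomputable def frobNorm {m n : ℕ} (M : Matrix (Fin m) (Fin n) ℝ) : ℝ :=
  Real.sqrt ((Mᵀ * M).trace)

/-- Nuclear norm of a real matrix: the trace of the positive semidefinite
square root of `MᵀM` (= sum of singular values). -/
noncomputable def nuclearNorm {m n : ℕ} (M : Matrix (Fin m) (Fin n) ℝ) : ℝ :=
  (Matrix.posSemidef_conjTranspose_mul_self M).sqrt.trace

/-- Spectral (ℓ2 → ℓ2 operator) norm of a real matrix: its largest singular value. -/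
noncomputable def opNorm {m n : ℕ} (M : Matrix (Fin m) (Fin n) ℝ) : ℝ :=
  ‖LinearMap.toContinuousLinearMap (Matrix.toEuclideanLin M)‖

/-- The ℓ1 norm of the vectorization of a matrix. -/
noncomputable def vecL1 {m n : ℕ} (M : Matrix (Fin m) (Fin n) ℝ) : ℝ :=
  ∑ i, ∑ j, |M i j|

/-- The ℓ∞ norm of the vectorization of a matrix. -/
noncomputable def vecLinf {m n : ℕ} (M : Matrix (Fin m) (Fin n) ℝ) : ℝ :=
  ⨆ i, ⨆ j, |M i j|

/-- Frobenius (trace) inner product of two matrices. -/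
noncomputable def traceInner {m n : ℕ} (M N : Matrix (Fin m) (Fin n) ℝ) : ℝ :=
  (Mᵀ * N).trace

open scoped Classical in
/-- The inverse of the positive semidefinite square root of a positive semidefinite
matrix (junk value `0` if the matrix is not positive semidefinite). -/
noncomputable def matInvSqrt {r : ℕ} (S : Matrix (Fin r) (Fin r) ℝ) :
    Matrix (Fin r) (Fin r) ℝ :=
  if h : S.PosSemidef then h.sqrt⁻¹ else 0

open scoped Matrix.Norms.L2Operator

lemma Matrix.PosSemidef.posSemidef_sqrt {n : ℕ} {A : Matrix (Fin n) (Fin n) ℝ}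
    (hA : A.PosSemidef) : hA.sqrt.PosSemidef := by
  unfold Matrix.PosSemidef.sqrt
  rw [star_eq_conjTranspose]
  refine PosSemidef.mul_mul_conjTranspose_same ?_ _
  rw [posSemidef_diagonal_iff]
  intro i
  simp [Real.sqrt_nonneg]

lemma Matrix.PosSemidef.sqrt_mul_self {n : ℕ} {A : Matrix (Fin n) (Fin n) ℝ}
    (hA : A.PosSemidef) : hA.sqrt * hA.sqrt = A := by
  unfold Matrix.PosSemidef.sqrt
  conv_rhs => rw [hA.1.spectral_theorem, Unitary.conjStarAlgAut_apply]
  have hU : (star hA.1.eigenvectorUnitary : Matrix (Fin n) (Fin n) ℝ) * hA.1.eigenvectorUnitary.1 = 1 :=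
    Unitary.coe_star_mul_self _
  have hD : diagonal ((RCLike.ofReal : ℝ → ℝ) ∘ (Real.sqrt ·) ∘ hA.1.eigenvalues) * diagonal ((RCLike.ofReal : ℝ → ℝ) ∘ (Real.sqrt ·) ∘ hA.1.eigenvalues)
      = diagonal (RCLike.ofReal ∘ hA.1.eigenvalues) := by
    rw [diagonal_mul_diagonal]
    congr 1; funext i
    simp [Real.mul_self_sqrt (hA.eigenvalues_nonneg i)]
  calc _ = hA.1.eigenvectorUnitary.1 * (diagonal ((RCLike.ofReal : ℝ → ℝ) ∘ (Real.sqrt ·) ∘ hA.1.eigenvalues) *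
      ((star hA.1.eigenvectorUnitary : Matrix (Fin n) (Fin n) ℝ) * hA.1.eigenvectorUnitary.1) *
      diagonal ((RCLike.ofReal : ℝ → ℝ) ∘ (Real.sqrt ·) ∘ hA.1.eigenvalues)) * (star hA.1.eigenvectorUnitary : Matrix (Fin n) (Fin n) ℝ) := by
        simp only [Matrix.mul_assoc]
    _ = _ := by rw [hU, Matrix.mul_one, hD]


lemma conjT_eq {m n : ℕ} (M : Matrix (Fin m) (Fin n) ℝ) : Mᴴ = Mᵀ := by
  ext i j; simp [Matrix.conjTranspose]

lemma opNorm_transp {m n : ℕ} (M : Matrix (Fin m) (Fin n) ℝ) : ‖Mᵀ‖ = ‖M‖ := by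
  rw [← conjT_eq]; exact Matrix.l2_opNorm_conjTranspose M

lemma opNorm_le_of_sq {m n : ℕ} (M : Matrix (Fin m) (Fin n) ℝ) {c : ℝ} (hc : 0 ≤ c)
    (h : ∀ x : Fin n → ℝ, (M *ᵥ x) ⬝ᵥ (M *ᵥ x) ≤ c ^ 2 * (x ⬝ᵥ x)) : ‖M‖ ≤ c := by
  rw [Matrix.l2_opNorm_def]
  apply ContinuousLinearMap.opNorm_le_bound _ hc
  intro x
  have hx : ∀ (k : ℕ) (v : EuclideanSpace ℝ (Fin k)), ‖v‖ ^ 2 = (WithLp.equiv 2 _ v) ⬝ᵥ (WithLp.equiv 2 _ v) := by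
    intro k v
    rw [EuclideanSpace.norm_eq, Real.sq_sqrt (by positivity)]
    simp [dotProduct, pow_two]
  refine le_of_pow_le_pow_left₀ two_ne_zero (by positivity) ?_
  have h1 : ‖(Matrix.toEuclideanLin.trans LinearMap.toContinuousLinearMap M) x‖ ^ 2
      = (M *ᵥ (WithLp.equiv 2 _ x)) ⬝ᵥ (M *ᵥ (WithLp.equiv 2 _ x)) := by
    rw [hx]; rfl
  rw [h1, mul_pow]
  calc _ ≤ c ^ 2 * ((WithLp.equiv 2 _ x) ⬝ᵥ (WithLp.equiv 2 _ x)) := h _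
    _ = c ^ 2 * ‖x‖ ^ 2 := by rw [hx]

lemma dot_mulVec_left {m n : ℕ} (A : Matrix (Fin m) (Fin n) ℝ) (y : Fin n → ℝ) (z : Fin m → ℝ) :
    (A *ᵥ y) ⬝ᵥ z = y ⬝ᵥ (Aᵀ *ᵥ z) := by
  rw [dotProduct_comm, Matrix.dotProduct_mulVec, Matrix.mulVec_transpose,
    dotProduct_comm]

/-- If `MᵀM - 1` is PSD (i.e. `M` expands norms) and `M` is invertible, `‖M⁻¹‖ ≤ 1`. -/
lemma inv_opNorm_le_one {r : ℕ} {M : Matrix (Fin r) (Fin r) ℝ} (hdet : IsUnit M.det)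
    (h : (Mᵀ * M - 1).PosSemidef) : ‖M⁻¹‖ ≤ 1 := by
  apply opNorm_le_of_sq _ zero_le_one
  intro x
  set y := M⁻¹ *ᵥ x with hy
  have hxy : M *ᵥ y = x := by
    rw [hy, Matrix.mulVec_mulVec, Matrix.mul_nonsing_inv _ hdet, Matrix.one_mulVec]
  have key := h.dotProduct_mulVec_nonneg y
  simp only [star_trivial] at key
  have expand : y ⬝ᵥ ((Mᵀ * M - 1) *ᵥ y) = x ⬝ᵥ x - y ⬝ᵥ y := by
    rw [Matrix.sub_mulVec, dotProduct_sub, Matrix.one_mulVec, ← Matrix.mulVec_mulVec,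
      ← dot_mulVec_left, hxy]
  rw [expand] at key
  rw [one_pow, one_mul]
  linarith

/-- If `MᵀM = 1` then `‖M‖ ≤ 1`. -/
lemma opNorm_le_one_of_orth {m n : ℕ} {M : Matrix (Fin m) (Fin n) ℝ}
    (h : Mᵀ * M = 1) : ‖M‖ ≤ 1 := by
  apply opNorm_le_of_sq _ zero_le_one
  intro x
  rw [dot_mulVec_left, Matrix.mulVec_mulVec, h, Matrix.one_mulVec, one_pow, one_mul]

private theorem aux_main
    (N r : ℕ)
    (B : Matrix (Fin N) (Fin r) ℝ) (Bc : Matrix (Fin N) (Fin (N - r)) ℝ)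
    (hB : Bᵀ * B = 1) (hBc : Bcᵀ * Bc = 1)
    (P : Matrix (Fin (N - r)) (Fin r) ℝ) (hSpsd : (1 + Pᵀ * P).PosSemidef) :
    ‖(B + Bc * P) * hSpsd.sqrt⁻¹ - B‖ ≤ 2 * ‖P‖ := by
  have hPpsd : (Pᵀ * P).PosSemidef := by
    have := Matrix.posSemidef_conjTranspose_mul_self P
    rwa [conjT_eq] at this
  have hS : (1 + Pᵀ * P).PosDef := Matrix.PosDef.add_posSemidef Matrix.PosDef.one hPpsd
  set R := hSpsd.sqrt with hRdef
  set Q := R⁻¹ with hQdef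
  have hRpsd : R.PosSemidef := hSpsd.posSemidef_sqrt
  have hRsymm : Rᵀ = R := by rw [← conjT_eq]; exact hRpsd.1
  have hRR : R * R = 1 + Pᵀ * P := hSpsd.sqrt_mul_self
  have hRdet : IsUnit R.det := by
    have h1 : R.det * R.det = (1 + Pᵀ * P).det := by rw [← Matrix.det_mul, hRR]
    have h2 : (0:ℝ) < (1 + Pᵀ * P).det := hS.det_pos
    refine isUnit_iff_ne_zero.2 fun hz => ?_
    rw [hz, mul_zero] at h1; linarith
  have hQR : Q * R = 1 := Matrix.nonsing_inv_mul R hRdet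
  have hRQ : R * Q = 1 := Matrix.mul_nonsing_inv R hRdet
  -- norms of the ingredients
  have hQ1 : ‖Q‖ ≤ 1 := by
    apply inv_opNorm_le_one hRdet
    rw [hRsymm, hRR]
    simpa using hPpsd
  have hT : (R + 1).PosDef := Matrix.PosDef.posSemidef_add hRpsd Matrix.PosDef.one
  have hTdet : IsUnit (R + 1).det := hT.isUnit.map (Matrix.detMonoidHom)
  have hT1 : ‖(R + 1)⁻¹‖ ≤ 1 := by
    apply inv_opNorm_le_one hTdet
    have : (R + 1)ᵀ * (R + 1) - 1 = (1 + Pᵀ * P) + (R + R) := by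
      rw [Matrix.transpose_add, hRsymm, Matrix.transpose_one]
      noncomm_ring [hRR]
    rw [this]
    exact hS.posSemidef.add (hRpsd.add hRpsd)
  have hPQ1 : ‖P * Q‖ ≤ 1 := by
    apply opNorm_le_of_sq _ zero_le_one
    intro x
    set y := Q *ᵥ x with hy
    have hxy : R *ᵥ y = x := by
      rw [hy, Matrix.mulVec_mulVec, hRQ, Matrix.one_mulVec]
    have e1 : (P * Q) *ᵥ x ⬝ᵥ (P * Q) *ᵥ x = y ⬝ᵥ ((Pᵀ * P) *ᵥ y) := by
      rw [← Matrix.mulVec_mulVec, ← hy, dot_mulVec_left, Matrix.mulVec_mulVec]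
    have e2 : x ⬝ᵥ x = y ⬝ᵥ y + y ⬝ᵥ ((Pᵀ * P) *ᵥ y) := by
      rw [← hxy, dot_mulVec_left, hRsymm, Matrix.mulVec_mulVec, hRR,
        Matrix.add_mulVec, dotProduct_add, Matrix.one_mulVec]
    have hyy : 0 ≤ y ⬝ᵥ y := by
      simpa using dotProduct_star_self_nonneg y
    rw [e1, one_pow, one_mul, e2]
    linarith [hyy]
  -- the key algebraic identity: 1 - Q = (Q * (R+1)⁻¹) * (Pᵀ * P)
  have hTinv : (R + 1)⁻¹ * (R + 1) = 1 := Matrix.nonsing_inv_mul _ hTdet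
  have hfac : (R + 1) * (R - 1) = Pᵀ * P := by
    have : (R + 1) * (R - 1) = R * R - 1 := by noncomm_ring
    rw [this, hRR]; noncomm_ring
  have hkey : (Q * (R + 1)⁻¹ * Pᵀ) * P = 1 - Q := by
    have h1 : (Q * (R + 1)⁻¹ * Pᵀ) * P = Q * ((R + 1)⁻¹ * ((R + 1) * (R - 1))) := by
      rw [hfac]; simp only [Matrix.mul_assoc]
    rw [h1, ← Matrix.mul_assoc ((R + 1)⁻¹), hTinv, Matrix.one_mul,
      Matrix.mul_sub, Matrix.mul_one, hQR]
  have hQsymm : Qᵀ = Q := by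
    rw [hQdef, Matrix.transpose_nonsing_inv, hRsymm]
  have hTsymm : (R + 1)ᵀ = R + 1 := by rw [Matrix.transpose_add, hRsymm, Matrix.transpose_one]
  have hcomm : (R + 1)⁻¹ * Q = Q * (R + 1)⁻¹ := by
    rw [hQdef, ← Matrix.mul_inv_rev, ← Matrix.mul_inv_rev]
    congr 1
    noncomm_ring
  have hfactor : ‖Q * (R + 1)⁻¹ * Pᵀ‖ ≤ 1 := by
    have e : (Q * (R + 1)⁻¹ * Pᵀ)ᵀ = P * Q * (R + 1)⁻¹ := by
      rw [Matrix.transpose_mul, Matrix.transpose_mul, Matrix.transpose_transpose,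
        Matrix.transpose_nonsing_inv, hTsymm, hQsymm, ← Matrix.mul_assoc, Matrix.mul_assoc,
        hcomm, ← Matrix.mul_assoc]
    calc ‖Q * (R + 1)⁻¹ * Pᵀ‖ = ‖(Q * (R + 1)⁻¹ * Pᵀ)ᵀ‖ := (opNorm_transp _).symm
      _ = ‖P * Q * (R + 1)⁻¹‖ := by rw [e]
      _ ≤ ‖P * Q‖ * ‖(R + 1)⁻¹‖ := Matrix.l2_opNorm_mul _ _
      _ ≤ 1 * 1 := mul_le_mul hPQ1 hT1 (norm_nonneg _) zero_le_one
      _ = 1 := one_mul 1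
  have hQm1 : ‖Q - 1‖ ≤ ‖P‖ := by
    rw [norm_sub_rev, ← hkey]
    calc ‖(Q * (R + 1)⁻¹ * Pᵀ) * P‖ ≤ ‖Q * (R + 1)⁻¹ * Pᵀ‖ * ‖P‖ := Matrix.l2_opNorm_mul _ _
      _ ≤ 1 * ‖P‖ := mul_le_mul_of_nonneg_right hfactor (norm_nonneg _)
      _ = ‖P‖ := one_mul _
  have hB1 : ‖B‖ ≤ 1 := opNorm_le_one_of_orth hB
  have hBc1 : ‖Bc‖ ≤ 1 := opNorm_le_one_of_orth hBc
  have hsplit : (B + Bc * P) * Q - B = B * (Q - 1) + Bc * P * Q := by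
    rw [Matrix.add_mul, Matrix.mul_sub, Matrix.mul_one]; abel
  rw [hsplit]
  have t1 : ‖B * (Q - 1)‖ ≤ ‖P‖ := by
    calc ‖B * (Q - 1)‖ ≤ ‖B‖ * ‖Q - 1‖ := Matrix.l2_opNorm_mul _ _
      _ ≤ 1 * ‖P‖ := mul_le_mul hB1 hQm1 (norm_nonneg _) zero_le_one
      _ = ‖P‖ := one_mul _
  have t2 : ‖Bc * P * Q‖ ≤ ‖P‖ := by
    calc ‖Bc * P * Q‖ ≤ ‖Bc * P‖ * ‖Q‖ := Matrix.l2_opNorm_mul _ _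
      _ ≤ (‖Bc‖ * ‖P‖) * 1 :=
        mul_le_mul (Matrix.l2_opNorm_mul _ _) hQ1 (norm_nonneg _)
          (mul_nonneg (norm_nonneg _) (norm_nonneg _))
      _ = ‖Bc‖ * ‖P‖ := mul_one _
      _ ≤ 1 * ‖P‖ := mul_le_mul_of_nonneg_right hBc1 (norm_nonneg _)
      _ = ‖P‖ := one_mul _
  calc ‖B * (Q - 1) + Bc * P * Q‖ ≤ ‖B * (Q - 1)‖ + ‖Bc * P * Q‖ := norm_add_le _ _
    _ ≤ ‖P‖ + ‖P‖ := add_le_add t1 t2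
    _ = 2 * ‖P‖ := by ring


/-- Bound on the distance between the perturbed orthonormal basis and the
original one: `‖(B + B_c·P)(I + PᵀP)^{-1/2} − B‖₂ ≤ 2‖P‖₂`. -/
theorem stmt_15
    (N r : ℕ)
    (B : Matrix (Fin N) (Fin r) ℝ) (Bc : Matrix (Fin N) (Fin (N - r)) ℝ)
    (hB : Bᵀ * B = 1) (hBc : Bcᵀ * Bc = 1) (hBBc : Bᵀ * Bc = 0)
    (hfull : B * Bᵀ + Bc * Bcᵀ = 1)
    (P : Matrix (Fin (N - r)) (Fin r) ℝ) :
    opNorm ((B + Bc * P) * matInvSqrt (1 + Pᵀ * P) - B) ≤ 2 * opNorm P := by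
  have hPpsd : (Pᵀ * P).PosSemidef := by
    have := Matrix.posSemidef_conjTranspose_mul_self P
    rwa [conjT_eq] at this
  have hSpsd : (1 + Pᵀ * P).PosSemidef :=
    (Matrix.PosDef.add_posSemidef Matrix.PosDef.one hPpsd).posSemidef
  have hmis : matInvSqrt (1 + Pᵀ * P) = hSpsd.sqrt⁻¹ := by
    rw [matInvSqrt, dif_pos hSpsd]
  have hgoal := aux_main N r B Bc hB hBc P hSpsd
  have he : ∀ {a b : ℕ} (M : Matrix (Fin a) (Fin b) ℝ), opNorm M = ‖M‖ := fun _ => rfl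
  rw [he, he, hmis]
  exact hgoal
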